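/- arXiv:2107.13584 — 3 statements merged into one kernel-verified Lean document; each statement's English description precedes it below -/
import Mathlib

section
/- Let n and d be real numbers with d ≤ n and d > (2-√2)·n + 3, and let h, k, q be real numbers with h ≥ 1, k < 0, and q > 0. Then (2(n+1-d)(n+2-d) + n + 1 - d^2)·h + (3n - 3d + 5)·k - 2q + 24 < 0. -/
/-- Numerical core of the del Pezzo corollary: with `h = H² ≥ 1`, `k = H·K < 0`,
`q = K² > 0`, the key inequality (1) fails when `d ≤ n` and `d > (2-√2)n + 3`. -/
theorem stmt_2 (n d h k q : ℝ) (hdn : d ≤ n) (hd : d > (2 - Real.sqrt 2) * n + 3)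
    (hh : h ≥ 1) (hk : k < 0) (hq : q > 0) :
    (2 * (n + 1 - d) * (n + 2 - d) + n + 1 - d ^ 2) * h
      + (3 * n - 3 * d + 5) * k - 2 * q + 24 < 0 := by
  set s := Real.sqrt 2 with hs
  have hs2 : s ^ 2 = 2 := Real.sq_sqrt (by norm_num)
  have hs1 : 1 < s := by
    nlinarith [Real.sqrt_nonneg 2]
  -- n is large: (s-1) n > 3
  have hn : (s - 1) * n > 3 := by nlinarith
  have hnpos : n > 0 := by nlinarith
  have hn4 : n > 4 := by nlinarith
  -- first factor positive
  have h1 : d - ((2 - s) * n + 3) > 0 := by linarith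
  -- second factor negative
  have h2 : d - ((2 + s) * n + 3) < 0 := by nlinarith
  have hprod : (d - ((2 - s) * n + 3)) * (d - ((2 + s) * n + 3)) ≤ 0 :=
    mul_nonpos_of_nonneg_of_nonpos (le_of_lt h1) (le_of_lt h2)
  have hsn : (s ^ 2 - 2) * n ^ 2 = 0 := by rw [hs2]; ring
  have hA : 2 * (n + 1 - d) * (n + 2 - d) + n + 1 - d ^ 2 ≤ -24 := by nlinarith [hprod, hsn]
  have hAh : (2 * (n + 1 - d) * (n + 2 - d) + n + 1 - d ^ 2) * h ≤
      2 * (n + 1 - d) * (n + 2 - d) + n + 1 - d ^ 2 := by nlinarith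
  have hcoef : (3 * n - 3 * d + 5) * k < 0 :=
    mul_neg_of_pos_of_neg (by linarith) hk
  linarith
end

section
/- Let n and d be real numbers with d ≤ n and d > (2-√2)·n + 4, and set B := 2(n+1-d)(n+2-d) + n + 1 - d^2 + (3n-3d+5) + 16. Then B < -(3n-3d+5) - 20. -/
/-- Main estimate in the Harbourne–Hirschowitz corollary: if `d ≤ n` and
`d > (2-√2)n + 4`, then the modified coefficient `B` of `H²` satisfies
`B < -(3n-3d+5) - 20`. -/
theorem stmt_3 (n d : ℝ) (hdn : d ≤ n) (hd : d > (2 - Real.sqrt 2) * n + 4) :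
    2 * (n + 1 - d) * (n + 2 - d) + n + 1 - d ^ 2 + (3 * n - 3 * d + 5) + 16
      < -(3 * n - 3 * d + 5) - 20 := by
  have h2 : Real.sqrt 2 ^ 2 = 2 := Real.sq_sqrt (by norm_num)
  have h1 : (1:ℝ) < Real.sqrt 2 := by nlinarith [Real.sqrt_nonneg 2]
  have hs : Real.sqrt 2 < 1.5 := by nlinarith [Real.sqrt_nonneg 2]
  have hn9 : (9:ℝ) < n := by nlinarith
  have hdpos : (0:ℝ) < d := by nlinarith
  have hc : (0:ℝ) < (2 - Real.sqrt 2) * n + 4 := by nlinarith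
  have hd2 : ((2 - Real.sqrt 2) * n + 4)^2 < d^2 := by nlinarith
  have ht : n - d < (Real.sqrt 2 - 1) * n - 4 := by nlinarith
  have ht0 : 0 ≤ n - d := by linarith
  have hb : 0 < (Real.sqrt 2 - 1) * n - 4 := by linarith
  have hsq : (n - d)^2 < ((Real.sqrt 2 - 1) * n - 4)^2 := by nlinarith
  nlinarith [mul_pos (show (0:ℝ) < 1.5 - Real.sqrt 2 by linarith) (show (0:ℝ) < n by linarith), sq_nonneg n]
end

section
/- Let 𝕜 be an algebraically closed field, let n ≥ 2, and let F be a homogeneous polynomial of degree d in the n+1 variables x_0,…,x_n over 𝕜 with 1 ≤ d ≤ n - 1. Then for every nonzero point p ∈ 𝕜^{n+1} with F(p) = 0, there exists v ∈ 𝕜^{n+1} that is not a scalar multiple of p such that F(s·p + t·v) = 0 for all s, t ∈ 𝕜. In other words, every point of a degree-d hypersurface in ℙⁿ with d ≤ n-1 lies on a line contained in the hypersurface. -/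
open MvPolynomial
open MvPolynomial

lemma aux_degree_sum {σ : Type*} [Fintype σ] (u : σ →₀ ℕ) : ∑ j, u j = u.degree := by
  rw [Finsupp.degree]
  exact (Finset.sum_subset (Finset.subset_univ _) (by
    intro x _ hx
    simpa using Finsupp.notMem_support_iff.mp hx)).symm

lemma aux_eval_smul {σ R : Type*} [Fintype σ] [CommSemiring R] {k : ℕ}
    {φ : MvPolynomial σ R} (hφ : φ.IsHomogeneous k) (c : R) (x : σ → R) :
    eval (c • x) φ = c ^ k * eval x φ := by
  rw [eval_eq', eval_eq', Finset.mul_sum]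
  refine Finset.sum_congr rfl fun u hu => ?_
  have hdeg : u.degree = k := by
    by_contra h
    exact (mem_support_iff.mp hu) (hφ.coeff_eq_zero h)
  have h2 : ∏ j, (c • x) j ^ u j = c ^ k * ∏ j, x j ^ u j := by
    simp only [Pi.smul_apply, smul_eq_mul, mul_pow]
    rw [Finset.prod_mul_distrib, Finset.prod_pow_eq_pow_sum, aux_degree_sum, hdeg]
  rw [h2]; ring

section
variable {𝕜 : Type*} [Field 𝕜] {N d : ℕ} (G : Fin d → MvPolynomial (Fin N) 𝕜) (e : Fin d → ℕ)
  (D : ℕ)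

/-- spanning set of "degree n" products `G^α · x^β` with `|β| < D`. -/
def Tset (n : ℕ) : Set (MvPolynomial (Fin N) 𝕜) :=
  {q | ∃ (α : Fin d → ℕ) (β : Fin N →₀ ℕ), (∑ i, α i * e i) + β.degree = n ∧ β.degree < D ∧
    q = (∏ i, G i ^ α i) * monomial β 1}

lemma aux_mul_mem {i : Fin d} {n' : ℕ} {h : MvPolynomial (Fin N) 𝕜}
    (hh : h ∈ Submodule.span 𝕜 (Tset G e D n')) :
    G i * h ∈ Submodule.span 𝕜 (Tset G e D (e i + n')) := by
  induction hh using Submodule.span_induction with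
  | mem q hq =>
    obtain ⟨α, β, hsum, hβ, rfl⟩ := hq
    refine Submodule.subset_span ⟨α + Pi.single i 1, β, ?_, hβ, ?_⟩
    · rw [← hsum]
      have h0 : ∀ k, ((α + Pi.single i 1 : Fin d → ℕ)) k * e k
          = α k * e k + (Pi.single i 1 : Fin d → ℕ) k * e k :=
        fun k => by rw [Pi.add_apply, add_mul]
      rw [Finset.sum_congr rfl fun k _ => h0 k, Finset.sum_add_distrib]
      have : ∑ k, (Pi.single i 1 : Fin d → ℕ) k * e k = e i := by
        rw [Finset.sum_eq_single i]
        · simp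
        · intro b _ hb; simp [Pi.single_apply, hb]
        · simp
      omega
    · have : (∏ k, G k ^ ((α + Pi.single i 1 : Fin d → ℕ)) k) = G i * ∏ k, G k ^ α k := by
        have h1 : ∀ k, G k ^ ((α + Pi.single i 1 : Fin d → ℕ)) k
            = G k ^ α k * G k ^ (Pi.single i 1 : Fin d → ℕ) k := fun k => by
          rw [Pi.add_apply, pow_add]
        rw [Finset.prod_congr rfl fun k _ => h1 k, Finset.prod_mul_distrib]
        have h2 : ∏ k, G k ^ (Pi.single i 1 : Fin d → ℕ) k = G i := by
          rw [Finset.prod_eq_single i]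
          · simp
          · intro b _ hb; simp [Pi.single_apply, hb]
          · simp
        rw [h2]; ring
      rw [this]; ring
  | zero => simp
  | add x y _ _ hx hy => rw [mul_add]; exact Submodule.add_mem _ hx hy
  | smul a x _ hx => rw [Algebra.mul_smul_comm]; exact Submodule.smul_mem _ _ hx

lemma aux_span (hG : ∀ i, (G i).IsHomogeneous (e i)) (he : ∀ i, 1 ≤ e i) (hD : 1 ≤ D) (m : ℕ)
    (hDm : ∀ u : Fin N →₀ ℕ, D ≤ u.degree → ∃ j, m ≤ u j)
    (c : Fin N → Fin d → MvPolynomial (Fin N) 𝕜)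
    (hc : ∀ j, ∑ i, c j i * G i = X j ^ m) :
    ∀ n (P : MvPolynomial (Fin N) 𝕜), P.IsHomogeneous n →
      P ∈ Submodule.span 𝕜 (Tset G e D n) := by
  intro n
  induction n using Nat.strong_induction_on with
  | _ n IH =>
  -- first reduce to monomials
  suffices hmono : ∀ u : Fin N →₀ ℕ, u.degree = n →
      (monomial u 1 : MvPolynomial (Fin N) 𝕜) ∈ Submodule.span 𝕜 (Tset G e D n) by
    intro P hP
    rw [P.as_sum]
    refine Submodule.sum_mem _ fun u hu => ?_
    have hud : u.degree = n := by
      by_contra hne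
      exact (mem_support_iff.mp hu) (hP.coeff_eq_zero hne)
    have : (monomial u (coeff u P) : MvPolynomial (Fin N) 𝕜)
        = (coeff u P) • monomial u 1 := by
      rw [smul_monomial, smul_eq_mul, mul_one]
    rw [this]
    exact Submodule.smul_mem _ _ (hmono u hud)
  intro u hud
  by_cases hn : n < D
  · exact Submodule.subset_span ⟨0, u, by simpa using hud, hud ▸ hn, by simp⟩
  push_neg at hn
  obtain ⟨j, hj⟩ := hDm u (hud ▸ hn)
  set β' : Fin N →₀ ℕ := u - Finsupp.single j m with hβ'
  have husplit : u = β' + Finsupp.single j m := by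
    ext a
    rcases eq_or_ne a j with rfl | ha
    · simp [hβ', Finsupp.single_apply]
      omega
    · simp [hβ', Finsupp.single_apply, Ne.symm ha]
  have hkey : (monomial u 1 : MvPolynomial (Fin N) 𝕜)
      = ∑ i, G i * (c j i * monomial β' 1) := by
    have : (monomial u 1 : MvPolynomial (Fin N) 𝕜) = X j ^ m * monomial β' 1 := by
      rw [X_pow_eq_monomial, monomial_mul, mul_one, husplit, add_comm]
    rw [this, ← hc j, Finset.sum_mul]
    exact Finset.sum_congr rfl fun i _ => by ring
  -- apply homogeneous component n
  have hmon_homog : (monomial u 1 : MvPolynomial (Fin N) 𝕜) ∈ homogeneousSubmodule (Fin N) 𝕜 n :=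
    (mem_homogeneousSubmodule _ _).mpr (isHomogeneous_monomial 1 hud)
  have hHC : homogeneousComponent n (monomial u (1:𝕜)) = monomial u 1 := by
    rw [homogeneousComponent_of_mem hmon_homog, if_pos rfl]
  rw [← hHC, hkey, map_sum]
  refine Submodule.sum_mem _ fun i _ => ?_
  set q : MvPolynomial (Fin N) 𝕜 := c j i * monomial β' 1 with hq
  have hqsum : G i * q = ∑ k ∈ Finset.range (q.totalDegree + 1),
      G i * homogeneousComponent k q := by
    rw [← Finset.mul_sum, sum_homogeneousComponent]
  rw [hqsum, map_sum]
  refine Submodule.sum_mem _ fun k _ => ?_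
  have hterm : (G i * homogeneousComponent k q) ∈ homogeneousSubmodule (Fin N) 𝕜 (e i + k) :=
    (mem_homogeneousSubmodule _ _).mpr
      ((hG i).mul (homogeneousComponent_isHomogeneous k q))
  by_cases hek : n = e i + k
  · rw [homogeneousComponent_of_mem hterm, if_pos hek]
    have hklt : k < n := by have := he i; omega
    exact hek ▸ aux_mul_mem G e D (IH k hklt _ (homogeneousComponent_isHomogeneous k q))
  · rw [homogeneousComponent_of_mem hterm, if_neg hek]
    exact Submodule.zero_mem _
end

theorem aux_common_zero {𝕜 : Type*} [Field 𝕜] [IsAlgClosed 𝕜] {N d : ℕ} (hdN : d < N)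
    (G : Fin d → MvPolynomial (Fin N) 𝕜) (e : Fin d → ℕ) (he : ∀ i, 1 ≤ e i)
    (hG : ∀ i, (G i).IsHomogeneous (e i)) :
    ∃ v : Fin N → 𝕜, v ≠ 0 ∧ ∀ i, eval v (G i) = 0 := by
  by_contra hcon
  push_neg at hcon
  have hzero : ∀ v : Fin N → 𝕜, (∀ i, eval v (G i) = 0) → v = 0 := by
    intro v hv
    by_contra hv0
    obtain ⟨i, hi⟩ := hcon v hv0
    exact hi (hv i)
  -- get uniform power of variables in the ideal
  obtain ⟨m, hm1, hmem⟩ : ∃ m : ℕ, 1 ≤ m ∧ ∀ j : Fin N, ∃ c : Fin d → MvPolynomial (Fin N) 𝕜,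
      ∑ i, c i * G i = X j ^ m := by
    set I : Ideal (MvPolynomial (Fin N) 𝕜) := Ideal.span (Set.range G) with hI
    have hrad : ∀ j : Fin N, ∃ k : ℕ, X j ^ k ∈ I := by
      intro j
      have hXj : X j ∈ I.radical := by
        rw [← vanishingIdeal_zeroLocus_eq_radical (K := 𝕜)]
        intro x hx
        have hx0 : x = 0 := by
          refine hzero x fun i => ?_
          exact (mem_zeroLocus_iff.mp hx) _ (Ideal.subset_span ⟨i, rfl⟩)
        simp [hx0]
      exact hXj
    choose k hk using hrad
    refine ⟨(Finset.univ.sup k) + 1, Nat.le_add_left 1 _, fun j => ?_⟩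
    have hkj : X j ^ ((Finset.univ.sup k) + 1) ∈ I := by
      have hle : (Finset.univ.sup k) + 1 = k j + ((Finset.univ.sup k) + 1 - k j) := by
        have := Finset.le_sup (Finset.mem_univ j) (f := k); omega
      rw [hle, pow_add]
      exact Ideal.mul_mem_right _ _ (hk j)
    rw [hI, Ideal.span, Submodule.mem_span_range_iff_exists_fun] at hkj
    obtain ⟨c, hc⟩ := hkj
    exact ⟨c, by simpa [smul_eq_mul] using hc⟩
  choose c hc using hmem
  set D : ℕ := N * (m - 1) + 1 with hD
  have hDm : ∀ u : Fin N →₀ ℕ, D ≤ u.degree → ∃ j, m ≤ u j := by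
    intro u hu
    by_contra hno
    push_neg at hno
    have : u.degree ≤ N * (m - 1) := by
      rw [← aux_degree_sum]
      calc ∑ j, u j ≤ ∑ _j : Fin N, (m - 1) :=
            Finset.sum_le_sum fun j _ => by have := hno j; omega
        _ = N * (m - 1) := by simp [Finset.sum_const, Finset.card_univ, mul_comm]
    omega
  have hspan := aux_span G e D hG he (Nat.le_add_left 1 _) m hDm c hc
  -- counting setup
  set M : ℕ := D ^ N * N ^ d with hM
  set E : ℕ := N * M with hE
  set ι := (Fin d → Fin (E + 1)) × (Fin N → Fin D) with hι
  set g : ι → MvPolynomial (Fin N) 𝕜 := fun ab =>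
    (∏ i, G i ^ (ab.1 i : ℕ)) * monomial (Finsupp.equivFunOnFinite.symm fun j => ((ab.2 j : ℕ))) 1
    with hg
  have hTsub : ∀ n, n ≤ E → Tset G e D n ⊆ Set.range g := by
    rintro n hn q ⟨α, β, hsum, hβ, rfl⟩
    have hα : ∀ i, α i ≤ E := by
      intro i
      have h1 : α i * 1 ≤ α i * e i := Nat.mul_le_mul_left _ (he i)
      have h2 : α i * e i ≤ ∑ k, α k * e k :=
        Finset.single_le_sum (f := fun k => α k * e k) (fun k _ => Nat.zero_le _)
          (Finset.mem_univ i)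
      omega
    have hβ' : ∀ j, β j < D := fun j => lt_of_le_of_lt (Finsupp.le_degree j β) hβ
    refine ⟨⟨fun i => ⟨α i, by have := hα i; omega⟩, fun j => ⟨β j, hβ' j⟩⟩, ?_⟩
    simp only [hg]
    congr 1
    have : (Finsupp.equivFunOnFinite.symm fun j => β j) = β := Finsupp.equivFunOnFinite_symm_coe β
    rw [this]
  set W := Submodule.span 𝕜 (Set.range g) with hW
  haveI : FiniteDimensional 𝕜 W := FiniteDimensional.span_of_finite _ (Set.finite_range g)
  -- the linearly independent monomial family
  set f : (Fin N → Fin (M + 1)) → MvPolynomial (Fin N) 𝕜 := fun cc =>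
    monomial (Finsupp.equivFunOnFinite.symm fun j => ((cc j : ℕ))) 1 with hf
  have hfW : ∀ cc, f cc ∈ W := by
    intro cc
    set β : Fin N →₀ ℕ := Finsupp.equivFunOnFinite.symm fun j => ((cc j : ℕ)) with hβ
    have hhom : (monomial β (1:𝕜)).IsHomogeneous β.degree := isHomogeneous_monomial 1 rfl
    have hdegE : β.degree ≤ E := by
      rw [← aux_degree_sum]
      calc ∑ j, β j ≤ ∑ _j : Fin N, M := Finset.sum_le_sum fun j _ => by
            have : (cc j : ℕ) < M + 1 := (cc j).isLt
            simp only [hβ, Finsupp.equivFunOnFinite_symm_apply_apply]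
            omega
        _ = N * M := by simp [Finset.sum_const, Finset.card_univ, mul_comm]
    exact Submodule.span_le.mpr (Set.Subset.trans (hTsub β.degree hdegE) Submodule.subset_span
      |>.trans (le_refl _)) (hspan β.degree _ hhom)
  have hli : LinearIndependent 𝕜 f := by
    have : f = (fun s => (monomial s (1:𝕜))) ∘
        (fun cc : Fin N → Fin (M + 1) => Finsupp.equivFunOnFinite.symm fun j => ((cc j : ℕ))) :=
      rfl
    rw [this, ← coe_basisMonomials]
    refine (basisMonomials (Fin N) 𝕜).linearIndependent.comp _ ?_
    intro a b hab
    funext j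
    have := congrArg (fun u : Fin N →₀ ℕ => u j) hab
    simp only [Finsupp.equivFunOnFinite_symm_apply_apply] at this
    exact Fin.val_injective this
  set f' : (Fin N → Fin (M + 1)) → W := fun cc => ⟨f cc, hfW cc⟩ with hf'
  have hli' : LinearIndependent 𝕜 f' := by
    apply LinearIndependent.of_comp W.subtype
    exact hli
  have hcard1 : Fintype.card (Fin N → Fin (M + 1)) ≤ Module.finrank 𝕜 W :=
    hli'.fintype_card_le_finrank
  have hcard2 : Module.finrank 𝕜 W ≤ Fintype.card ι := by
    classical
    haveI : Fintype ↑(Set.range g) := Set.fintypeRange g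
    refine (finrank_span_le_card (Set.range g)).trans ?_
    rw [Set.toFinset_card]
    exact Fintype.card_range_le g
  have hcards : (M + 1) ^ N ≤ (E + 1) ^ d * D ^ N := by
    have h1 : Fintype.card (Fin N → Fin (M + 1)) = (M + 1) ^ N := by simp
    have h2 : Fintype.card ι = (E + 1) ^ d * D ^ N := by simp [hι]
    omega
  -- numeric contradiction
  have hN1 : 1 ≤ N := by omega
  have hstep : (E + 1) ^ d * D ^ N ≤ (M + 1) ^ d * (N ^ d * D ^ N) := by
    have h1 : E + 1 ≤ N * (M + 1) := by
      have : N * (M+1) = N * M + N := by ring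
      omega
    calc (E + 1) ^ d * D ^ N ≤ (N * (M + 1)) ^ d * D ^ N :=
          Nat.mul_le_mul_right _ (Nat.pow_le_pow_left h1 d)
      _ = (M + 1) ^ d * (N ^ d * D ^ N) := by rw [mul_pow]; ring
  have hfinal : (M + 1) ^ d * (N ^ d * D ^ N) < (M + 1) ^ N := by
    have hMval : N ^ d * D ^ N = M := by rw [hM]; ring
    rw [hMval]
    calc (M + 1) ^ d * M < (M + 1) ^ d * (M + 1) := by
          have hpos : 0 < (M + 1) ^ d := Nat.pow_pos (by omega)
          exact (Nat.mul_lt_mul_left hpos).mpr (by omega)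
      _ = (M + 1) ^ (d + 1) := by rw [pow_succ]
      _ ≤ (M + 1) ^ N := Nat.pow_le_pow_right (by omega) (by omega)
  omega

open MvPolynomial

lemma aux_aeval_eq_eval {𝕜 : Type*} [CommSemiring 𝕜] {σ : Type*} (x : σ → 𝕜)
    (P : MvPolynomial σ 𝕜) : aeval x P = eval x P := by
  rw [aeval_def, eval, Algebra.algebraMap_self]; rfl

lemma aux_eval_aeval {𝕜 : Type*} [CommSemiring 𝕜] {σ τ : Type*}
    (f : σ → MvPolynomial τ 𝕜) (x : τ → 𝕜) (P : MvPolynomial σ 𝕜) :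
    eval x (aeval f P) = eval (fun i => eval x (f i)) P := by
  rw [← aux_aeval_eq_eval, ← aux_aeval_eq_eval]
  rw [comp_aeval_apply]
  congr 1

lemma aux_degree_sum' {σ : Type*} (u : σ →₀ ℕ) : (u.sum fun _ e => e) = u.degree := rfl

lemma aux_totalDegree_aeval {𝕜 : Type*} [CommSemiring 𝕜] {σ τ : Type*} [Fintype σ]
    (f : σ → MvPolynomial τ 𝕜) (hf : ∀ i, (f i).totalDegree ≤ 1)
    (P : MvPolynomial σ 𝕜) : (aeval f P).totalDegree ≤ P.totalDegree := by
  rw [aeval_def, eval₂_eq']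
  refine (totalDegree_finset_sum _ _).trans (Finset.sup_le fun u hu => ?_)
  refine (totalDegree_mul _ _).trans ?_
  have h1 : (algebraMap 𝕜 (MvPolynomial τ 𝕜) (coeff u P)).totalDegree = 0 := totalDegree_C _
  rw [h1, zero_add]
  refine (totalDegree_finset_prod _ _).trans ?_
  have h2 : ∀ i, (f i ^ u i).totalDegree ≤ u i := fun i =>
    (totalDegree_pow _ _).trans (by simpa using Nat.mul_le_mul_left (u i) (hf i))
  refine (Finset.sum_le_sum fun i _ => h2 i).trans ?_
  have h3 : ∑ i, u i = u.degree := by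
    rw [Finsupp.degree]
    exact (Finset.sum_subset (Finset.subset_univ _) (by
      intro x _ hx
      simpa using Finsupp.notMem_support_iff.mp hx)).symm
  rw [h3, ← aux_degree_sum']
  exact le_totalDegree hu


/-- Every point of a degree-`d` hypersurface in ℙⁿ with `1 ≤ d ≤ n-1` (over an
algebraically closed field) lies on a line contained in the hypersurface:
for every nonzero `p` with `F(p) = 0`, there is `v` not a scalar multiple of `p`
with `F(s·p + t·v) = 0` for all `s, t`. -/
theorem stmt_7 {𝕜 : Type*} [Field 𝕜] [IsAlgClosed 𝕜] (n d : ℕ) (hn : 2 ≤ n)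
    (hd1 : 1 ≤ d) (hdn : d ≤ n - 1)
    (F : MvPolynomial (Fin (n + 1)) 𝕜) (hF : F.IsHomogeneous d)
    (p : Fin (n + 1) → 𝕜) (hp : p ≠ 0) (hFp : MvPolynomial.eval p F = 0) :
    ∃ v : Fin (n + 1) → 𝕜, (¬ ∃ c : 𝕜, v = c • p) ∧
      ∀ s t : 𝕜, MvPolynomial.eval (s • p + t • v) F = 0 := by
  classical
  obtain ⟨j, hpj⟩ := Function.ne_iff.mp hp
  rw [Pi.zero_apply] at hpj
  set Fp : MvPolynomial (Fin (n+1)) 𝕜 := aeval (fun i => X i + C (p i)) F with hFpdef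
  have hFpdeg : Fp.totalDegree ≤ d := by
    refine (aux_totalDegree_aeval _ ?_ F).trans hF.totalDegree_le
    intro i
    refine (totalDegree_add _ _).trans ?_
    simp [totalDegree_X, totalDegree_C]
  have heval1 : ∀ u : Fin (n+1) → 𝕜, eval u Fp = eval (u + p) F := by
    intro u
    rw [hFpdef, aux_eval_aeval]
    have h0 : (fun i => eval u (X i + C (p i))) = u + p := by
      funext i
      simp
    rw [h0]
  have hdecompP : ∑ k ∈ Finset.range (d+1), homogeneousComponent k Fp = Fp := by
    have hsub : Finset.range (Fp.totalDegree + 1) ⊆ Finset.range (d + 1) := by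
      intro k hk
      rw [Finset.mem_range] at hk ⊢
      omega
    have hzero2 : ∀ k ∈ Finset.range (d+1), k ∉ Finset.range (Fp.totalDegree + 1) →
        homogeneousComponent k Fp = 0 := by
      intro k _ hk2
      rw [Finset.mem_range, not_lt] at hk2
      exact homogeneousComponent_eq_zero k Fp (Nat.lt_of_succ_le hk2)
    exact Eq.trans (Finset.sum_subset hsub hzero2).symm (sum_homogeneousComponent Fp)
  have hdecomp : ∀ u : Fin (n+1) → 𝕜, eval (u + p) F
      = ∑ k ∈ Finset.range (d+1), eval u (homogeneousComponent k Fp) := by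
    intro u
    rw [← heval1]
    conv_lhs => rw [← hdecompP]
    exact map_sum (eval u) _ _
  set ff : Fin (n+1) → MvPolynomial (Fin n) 𝕜 := j.insertNth 0 X with hffdef
  have hff : ∀ i, (ff i).IsHomogeneous 1 := by
    refine Fin.succAboveCases j ?_ ?_
    · have h0 : ff j = 0 := by simp [hffdef]
      rw [h0]
      exact isHomogeneous_zero _ _ _
    · intro k
      have h0 : ff (j.succAbove k) = X k := by simp [hffdef]
      rw [h0]
      exact isHomogeneous_X _ _
  set G : Fin d → MvPolynomial (Fin n) 𝕜 :=
    fun i => aeval ff (homogeneousComponent ((i:ℕ) + 1) Fp) with hGdef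
  have hG : ∀ i : Fin d, (G i).IsHomogeneous ((i:ℕ) + 1) := by
    intro i
    have := (homogeneousComponent_isHomogeneous ((i:ℕ)+1) Fp).aeval ff hff
    simpa [hGdef] using this
  obtain ⟨w, hw0, hwz⟩ := aux_common_zero (show d < n by omega) G (fun i => (i:ℕ)+1)
    (fun i => Nat.le_add_left 1 _) hG
  set v : Fin (n+1) → 𝕜 := j.insertNth 0 w with hvdef
  have hvj : v j = 0 := by simp [hvdef]
  have hcomp : (fun i => eval w (ff i)) = v := by
    funext i'
    refine Fin.succAboveCases j ?_ ?_ i'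
    · simp [hffdef, hvdef]
    · intro k
      simp [hffdef, hvdef]
  have hzero_eval : ∀ x : Fin (n+1) → 𝕜, eval x (homogeneousComponent 0 Fp) = coeff 0 Fp := by
    intro x
    rw [homogeneousComponent_zero, eval_C]
  have hpos0 : ∀ k, 1 ≤ k → eval (0 : Fin (n+1) → 𝕜) (homogeneousComponent k Fp) = 0 := by
    intro k hk
    have h1 := aux_eval_smul (homogeneousComponent_isHomogeneous k Fp) (0:𝕜) (0 : Fin (n+1) → 𝕜)
    rw [smul_zero] at h1
    rw [h1, zero_pow (by omega), zero_mul]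
  have hp0 : ∑ k ∈ Finset.range (d+1),
      eval (0 : Fin (n+1) → 𝕜) (homogeneousComponent k Fp) = 0 := by
    rw [← hdecomp 0, zero_add, hFp]
  have hvFc : ∀ k, k ≤ d → eval v (homogeneousComponent k Fp) = 0 := by
    intro k hkd
    rcases Nat.eq_zero_or_pos k with rfl | hk1
    · have hs : ∑ k ∈ Finset.range (d+1),
          eval (0 : Fin (n+1) → 𝕜) (homogeneousComponent k Fp)
          = eval (0 : Fin (n+1) → 𝕜) (homogeneousComponent 0 Fp) := by
        apply Finset.sum_eq_single 0
        · intro b _ hb0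
          exact hpos0 b (by omega)
        · intro h
          exact absurd (Finset.mem_range.mpr (by omega)) h
      rw [hs] at hp0
      rw [hzero_eval v, ← hzero_eval (0 : Fin (n+1) → 𝕜)]
      exact hp0
    · obtain ⟨i, hik⟩ : ∃ i : Fin d, (i:ℕ) + 1 = k :=
        ⟨⟨k-1, by omega⟩, by show k - 1 + 1 = k; omega⟩
      have h5 := hwz i
      rw [hGdef] at h5
      simp only at h5
      rw [aux_eval_aeval, hcomp, hik] at h5
      exact h5
  have hline : ∀ c : 𝕜, eval (c • v + p) F = 0 := by
    intro c
    rw [hdecomp]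
    refine Finset.sum_eq_zero fun k hk => ?_
    rw [aux_eval_smul (homogeneousComponent_isHomogeneous k Fp) c v,
      hvFc k (by simp only [Finset.mem_range] at hk; omega), mul_zero]
  have hFv : eval v F = 0 := by
    set q : Polynomial 𝕜 :=
      aeval (fun i => Polynomial.C (v i) + Polynomial.X * Polynomial.C (p i)) F with hqdef
    have hq : ∀ s : 𝕜, Polynomial.eval s q = eval (v + s • p) F := by
      intro s
      have h1 := comp_aeval_apply
        (fun i => Polynomial.C (v i) + Polynomial.X * Polynomial.C (p i))
        (Polynomial.aeval s) F
      rw [hqdef, ← Polynomial.coe_aeval_eq_eval, h1]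
      have h2 : (fun i => Polynomial.aeval s
          (Polynomial.C (v i) + Polynomial.X * Polynomial.C (p i))) = v + s • p := by
        funext i
        simp
        ring
      rw [h2, aux_aeval_eq_eval]
    have hq0 : ∀ s : 𝕜, s ≠ 0 → Polynomial.eval s q = 0 := by
      intro s hs
      rw [hq]
      have h2 : v + s • p = s • ((s⁻¹) • v + p) := by
        funext i
        simp only [Pi.add_apply, Pi.smul_apply, smul_eq_mul]
        field_simp
      rw [h2, aux_eval_smul hF, hline, mul_zero]
    have hqz : q = 0 := by
      apply Polynomial.eq_zero_of_infinite_isRoot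
      refine Set.Infinite.mono ?_ ((Set.finite_singleton (0:𝕜)).infinite_compl)
      intro s hs
      exact hq0 s (by simpa using hs)
    have h3 := hq 0
    rw [hqz] at h3
    simp only [Polynomial.eval_zero] at h3
    have h4 : v + (0:𝕜) • p = v := by funext i; simp
    rw [h4] at h3
    exact h3.symm
  refine ⟨v, ?_, ?_⟩
  · rintro ⟨c, hc⟩
    have hcj : v j = c * p j := by rw [hc]; simp
    rw [hvj] at hcj
    have hc0 : c = 0 := by
      rcases mul_eq_zero.mp hcj.symm with h | h
      · exact h
      · exact absurd h hpj
    obtain ⟨k, hk⟩ := Function.ne_iff.mp hw0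
    have h3 : w k = v (j.succAbove k) := by simp [hvdef]
    rw [hc, hc0] at h3
    simp only [Pi.smul_apply, zero_smul, smul_eq_mul, zero_mul] at h3
    exact hk (by simpa using h3)
  · intro s t
    rcases eq_or_ne s 0 with rfl | hs
    · have h2 : (0:𝕜) • p + t • v = t • v := by funext i; simp
      rw [h2, aux_eval_smul hF, hFv, mul_zero]
    · have h2 : s • p + t • v = s • ((t/s) • v + p) := by
        funext i
        simp only [Pi.add_apply, Pi.smul_apply, smul_eq_mul]
        field_simp
        ring
      rw [h2, aux_eval_smul hF, hline, mul_zero]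
end
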